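/- Let n ≥ 2 and let u be a subword of λ̂_n with skip indices i_1 < ⋯ < i_s and skip reflections r^u = [r_1, …, r_s]. Then for each j ∈ {1, …, s}, (r_1 ⋯ r_{j−1}) r_j (r_{j−1} ⋯ r_1) = (( 0, i_j + ⌊(i_j − 1)/(n−1)⌋ )). -/

import Mathlib

/-- The affine reflection `((i,j))` of the affine symmetric group `W̃ₙ`, as a function
`ℤ → ℤ`: it interchanges `i + k*n` and `j + k*n` for every `k ∈ ℤ` and fixes all
integers not congruent to `i` or `j` mod `n`. -/
def affRefl (n : ℕ) (i j : ℤ) : ℤ → ℤ := fun k =>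
  if (k - i) % (n : ℤ) = 0 then k - i + j
  else if (k - j) % (n : ℤ) = 0 then k - j + i
  else k

/-- `t : ℤ → ℤ` is an affine reflection of `W̃ₙ`. -/
def IsAffRefl (n : ℕ) (t : ℤ → ℤ) : Prop :=
  ∃ i j : ℤ, (i - j) % (n : ℤ) ≠ 0 ∧ t = affRefl n i j

/-- The simple reflection `sⱼ = ((j, j+1))`. -/
def simpleRefl (n : ℕ) (j : ℤ) : ℤ → ℤ := affRefl n j (j + 1)

/-- The translation `λₙ`: it sends `k ≡ 0 (mod n)` to `k - n(n-1)` and all other `k`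
to `k + n`. -/
def lam (n : ℕ) : ℤ → ℤ := fun k =>
  if k % (n : ℤ) = 0 then k - (n : ℤ) * ((n : ℤ) - 1) else k + (n : ℤ)

/-- The product `r₁ r₂ ⋯ rₘ` of a list of elements, with `(w·v)(k) = w(v(k))`. -/
def listProd (l : List (ℤ → ℤ)) : ℤ → ℤ := l.foldr (· ∘ ·) id

/-- `l` is a factorization of `λₙ` into affine reflections. -/
def IsFactorization (n : ℕ) (l : List (ℤ → ℤ)) : Prop :=
  (∀ t ∈ l, IsAffRefl n t) ∧ listProd l = lam n

/-- A tree-like factorization of `λₙ`: a factorization `[r₁, …, r_{2n-2}]` into `2n-2`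
affine reflections such that there are integers `a₀, …, a_{2n-2}` and `b₁, …, b_{2n-2}`
with `r_k = ((a_{k-1}, b_k))`, `a_{k-1} < b_k` and `a_k ≡ b_k (mod n)`
(0-based: `r` at index `k` equals `((a k, b (k+1)))`). -/
def IsTreeLike (n : ℕ) (l : List (ℤ → ℤ)) : Prop :=
  IsFactorization n l ∧ l.length = 2 * n - 2 ∧
  ∃ a b : ℕ → ℤ, ∀ k : ℕ, ∀ h : k < l.length,
    l.get ⟨k, h⟩ = affRefl n (a k) (b (k + 1)) ∧
    a k < b (k + 1) ∧ (a (k + 1) - b (k + 1)) % (n : ℤ) = 0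

/-- `a₀ < a₁ < ⋯` is a strictly increasing endpoint sequence of the factorization `l`:
`r_ℓ = ((a_{ℓ-1}, a_ℓ))` (0-based: `r` at index `k` is `((a k, a (k+1)))`). -/
def EndSeq (n : ℕ) (l : List (ℤ → ℤ)) (a : ℕ → ℤ) : Prop :=
  ∀ k : ℕ, ∀ h : k < l.length,
    a k < a (k + 1) ∧ l.get ⟨k, h⟩ = affRefl n (a k) (a (k + 1))

/-- The representative of `x` modulo `n` lying in `{1, …, n}`. -/
def resOne (n : ℕ) (x : ℤ) : ℤ := if x % (n : ℤ) = 0 then (n : ℤ) else x % (n : ℤ)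

/-- `nb_k(r)` for the endpoint sequence `a` of a tree-like factorization of `λₙ`:
the list of the residues `a_i mod n` (representatives in `{1, …, n}`), in increasing
order of the index `i ∈ {1, …, 2n-2}`, over those `i` with `a_{i-1} ≡ k (mod n)`
(0-based: indices `i < 2n-2` with `a i ≡ k`, recording the residue of `a (i+1)`). -/
def nb (n : ℕ) (a : ℕ → ℤ) (k : ℤ) : List ℤ :=
  ((List.range (2 * n - 2)).filter (fun i => decide ((a i - k) % (n : ℤ) = 0))).map
    (fun i => resOne n (a (i + 1)))

/-- A cyclic factorization of `λₙ`: a tree-like factorization such that, for an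
endpoint sequence `a` as above, (i) `nb_n` is strictly increasing; and (ii) for each
`k ∈ {1, …, n-1}`, writing `nb_k = [c₁, …, c_ℓ]`, there is `j ∈ {1, …, ℓ}` with
`c_j < c_{j+1} < ⋯ < c_{ℓ-1} < k < c₁ < ⋯ < c_{j-1}`. -/
def IsCyclicFact (n : ℕ) (l : List (ℤ → ℤ)) : Prop :=
  IsTreeLike n l ∧
  ∃ a : ℕ → ℤ, EndSeq n l a ∧
    List.Chain' (· < ·) (nb n a (n : ℤ)) ∧
    (∀ k : ℤ, 1 ≤ k → k ≤ (n : ℤ) - 1 →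
      ∃ m : ℕ, m < (nb n a k).length ∧
        List.Chain' (· < ·)
          ((nb n a k).dropLast.drop m ++ k :: (nb n a k).dropLast.take m))

/-- The letter at (0-based) position `j` of the subword of `λ̂ₙ` with skip set `S`:
the identity `e` if `j` is a skip, and the simple reflection `sⱼ` otherwise. -/
def letterAt (n : ℕ) (S : Finset ℕ) (j : ℕ) : ℤ → ℤ :=
  if j ∈ S then id else simpleRefl n (j : ℤ)

/-- The subword of the word `λ̂ₙ = [s₀, s₁, …, s_{n-1}]^{n-1}` (of length `N = n(n-1)`,
whose letter at 0-based position `j` is `s_j`) with skip set `S`. -/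
def subword (n : ℕ) (S : Finset ℕ) : List (ℤ → ℤ) :=
  (List.range (n * (n - 1))).map (letterAt n S)

/-- `u_{(j)}`: the product of the first `j` letters of the subword. -/
def uPref (n : ℕ) (S : Finset ℕ) (j : ℕ) : ℤ → ℤ :=
  listProd ((subword n S).take j)

/-- `u_{(j)}⁻¹`: since every letter is an involution, the inverse of `u_{(j)}` is the
product of the first `j` letters in reverse order. -/
def uPrefInv (n : ℕ) (S : Finset ℕ) (j : ℕ) : ℤ → ℤ :=
  listProd (((subword n S).take j).reverse)

/-- The element `t_{j+1} = u_{(j)} s_j u_{(j)}⁻¹` of `inv(u)` (0-based `j`). -/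
def conjAt (n : ℕ) (S : Finset ℕ) (j : ℕ) : ℤ → ℤ :=
  uPref n S j ∘ simpleRefl n (j : ℤ) ∘ uPrefInv n S j

/-- The (0-based) skip indices of the subword, in increasing order. -/
def skipIdx (S : Finset ℕ) : List ℕ := S.sort (· ≤ ·)

/-- The sequence `r^u` of skip reflections of the subword with skip set `S`. -/
def skipRefls (n : ℕ) (S : Finset ℕ) : List (ℤ → ℤ) :=
  (skipIdx S).map (conjAt n S)

/-- The subword with skip set `S` is a member of `S_n`: it is a subword of `λ̂ₙ`
with exactly `2n-2` skips whose product is the identity. -/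
def SnMem (n : ℕ) (S : Finset ℕ) : Prop :=
  S ⊆ Finset.range (n * (n - 1)) ∧ S.card = 2 * n - 2 ∧ listProd (subword n S) = id

/-- The product of the suffix `r_{i+1} ⋯ r_m` (0-based: drops the first `i` factors). -/
def suffixProd (l : List (ℤ → ℤ)) (i : ℕ) : ℤ → ℤ := listProd (l.drop i)

/-- The cyclic segment product `u_{a+1} u_{a+2} ⋯ u_{a+L}` of the subword with skip set
`S` (0-based starting position `a`, indices taken modulo `N = n(n-1)`). -/
def segProd (n : ℕ) (S : Finset ℕ) (a L : ℕ) : ℤ → ℤ :=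
  listProd ((List.range L).map (fun t => letterAt n S ((a + t) % (n * (n - 1)))))


/-! ### Auxiliary lemmas -/

lemma LP_append (l₁ l₂ : List (ℤ → ℤ)) :
    listProd (l₁ ++ l₂) = listProd l₁ ∘ listProd l₂ := by
  induction l₁ with
  | nil => rfl
  | cons f t ih =>
    show f ∘ listProd (t ++ l₂) = (f ∘ listProd t) ∘ listProd l₂
    rw [ih, Function.comp_assoc]

lemma LP_range_succ (f : ℕ → ℤ → ℤ) (m : ℕ) :
    listProd ((List.range (m + 1)).map f) = listProd ((List.range m).map f) ∘ f m := by
  rw [List.range_succ, List.map_append, LP_append]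
  rfl

lemma LP_rev_prod (l : List (ℤ → ℤ)) (h : ∀ f ∈ l, f ∘ f = id) :
    listProd l.reverse ∘ listProd l = id := by
  induction l with
  | nil => rfl
  | cons f t ih =>
    have hf := h f (by simp)
    have ht := ih (fun g hg => h g (by simp [hg]))
    funext k
    have h1 : ∀ x, f (f x) = x := fun x => congrFun hf x
    have h2 : ∀ x, listProd t.reverse (listProd t x) = x := fun x => congrFun ht x
    show listProd ((f :: t).reverse) (listProd (f :: t) k) = k
    rw [List.reverse_cons, LP_append]
    show listProd t.reverse (f (f (listProd t k))) = k
    rw [h1, h2]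

lemma LP_prod_rev (l : List (ℤ → ℤ)) (h : ∀ f ∈ l, f ∘ f = id) :
    listProd l ∘ listProd l.reverse = id := by
  induction l with
  | nil => rfl
  | cons f t ih =>
    have hf := h f (by simp)
    have ht := ih (fun g hg => h g (by simp [hg]))
    funext k
    have h1 : ∀ x, f (f x) = x := fun x => congrFun hf x
    have h2 : ∀ x, listProd t (listProd t.reverse x) = x := fun x => congrFun ht x
    show listProd (f :: t) (listProd ((f :: t).reverse) k) = k
    rw [List.reverse_cons, LP_append]
    show f (listProd t (listProd t.reverse (f k))) = k
    rw [h2, h1]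

lemma affRefl_invol {n : ℕ} {a b : ℤ} (h : (a - b) % (n : ℤ) ≠ 0) :
    affRefl n a b ∘ affRefl n a b = id := by
  have hba : (b - a) % (n : ℤ) ≠ 0 := by
    intro hc
    apply h
    have hd : (n : ℤ) ∣ (b - a) := Int.dvd_of_emod_eq_zero hc
    have hd2 : (n : ℤ) ∣ (a - b) := by
      rw [show a - b = -(b - a) by ring]; exact dvd_neg.mpr hd
    exact Int.emod_eq_zero_of_dvd hd2
  funext k
  simp only [Function.comp, affRefl, id]
  by_cases h1 : (k - a) % (n : ℤ) = 0
  · simp only [if_pos h1]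
    have e1 : (k - a + b - a) % (n : ℤ) ≠ 0 := by
      have : k - a + b - a = (b - a) + (k - a) := by ring
      rw [this, Int.add_emod, h1, add_zero, Int.emod_emod_of_dvd _ dvd_rfl]
      exact hba
    simp only [if_neg e1]
    have e2 : (k - a + b - b) % (n : ℤ) = 0 := by
      have : k - a + b - b = k - a := by ring
      rw [this]; exact h1
    simp only [if_pos e2]; ring
  · simp only [if_neg h1]
    by_cases h2 : (k - b) % (n : ℤ) = 0
    · simp only [if_pos h2]
      have e1 : (k - b + a - a) % (n : ℤ) = 0 := by
        have : k - b + a - a = k - b := by ring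
        rw [this]; exact h2
      simp only [if_pos e1]; ring
    · simp only [if_neg h2, if_neg h1]

lemma simpleRefl_invol {n : ℕ} (hn : 2 ≤ n) (j : ℤ) :
    simpleRefl n j ∘ simpleRefl n j = id := by
  apply affRefl_invol
  have hn2 : (2 : ℤ) ≤ (n : ℤ) := by exact_mod_cast hn
  rw [show j - (j + 1) = ((n : ℤ) - 1) + (n : ℤ) * (-1) by ring,
    Int.add_mul_emod_self_left, Int.emod_eq_of_lt (by omega) (by omega)]
  omega

lemma s_s {n : ℕ} (hn : 2 ≤ n) (j : ℤ) (x : ℤ) :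
    simpleRefl n j (simpleRefl n j x) = x := congrFun (simpleRefl_invol hn j) x

lemma letterAt_invol {n : ℕ} (hn : 2 ≤ n) (S : Finset ℕ) (j : ℕ) :
    letterAt n S j ∘ letterAt n S j = id := by
  by_cases h : j ∈ S
  · simp [letterAt, h]
  · simp only [letterAt, if_neg h]
    exact simpleRefl_invol hn j

/-- full-word letters as a function of a natural index -/
def sletter (n : ℕ) (j : ℕ) : ℤ → ℤ := simpleRefl n (j : ℤ)

/-- full word prefix product `s₀ ∘ s₁ ∘ ⋯ ∘ s_{m-1}` -/
def fw (n : ℕ) : ℕ → ℤ → ℤ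
  | 0 => id
  | (m + 1) => fw n m ∘ simpleRefl n (m : ℤ)

lemma fw_eq_listProd (n : ℕ) (m : ℕ) :
    fw n m = listProd ((List.range m).map (sletter n)) := by
  induction m with
  | zero => rfl
  | succ m ih =>
    rw [LP_range_succ, ← ih]
    rfl

def fwInv (n : ℕ) (m : ℕ) : ℤ → ℤ :=
  listProd (((List.range m).map (sletter n)).reverse)

lemma sletter_mem_invol {n : ℕ} (hn : 2 ≤ n) (m : ℕ) :
    ∀ f ∈ (List.range m).map (sletter n), f ∘ f = id := by
  intro f hf
  obtain ⟨j, _, rfl⟩ := List.mem_map.mp hf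
  exact simpleRefl_invol hn j

lemma fw_fwInv {n : ℕ} (hn : 2 ≤ n) (m : ℕ) (x : ℤ) : fw n m (fwInv n m x) = x := by
  rw [fw_eq_listProd]
  exact congrFun (LP_prod_rev _ (sletter_mem_invol hn m)) x

lemma fwInv_fw {n : ℕ} (hn : 2 ≤ n) (m : ℕ) (x : ℤ) : fwInv n m (fw n m x) = x := by
  rw [fw_eq_listProd]
  exact congrFun (LP_rev_prod _ (sletter_mem_invol hn m)) x

/-- explicit formula for `fw` -/
def F (n : ℕ) (m : ℕ) : ℤ → ℤ := fun k =>
  if (k - m) % (n : ℤ) = 0 then k - m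
  else k + ((m : ℤ) + (k - m) % (n : ℤ) - 1) / ((n : ℤ) - 1)

lemma fw_eq_F {n : ℕ} (hn : 2 ≤ n) (m : ℕ) : fw n m = F n m := by
  have hn1 : (1 : ℤ) < (n : ℤ) := by exact_mod_cast hn
  have hn0 : (0 : ℤ) < (n : ℤ) := by linarith
  have hmod1 : (1 : ℤ) % (n : ℤ) = 1 := Int.emod_eq_of_lt (by norm_num) hn1
  induction m with
  | zero =>
    funext k
    show id k = F n 0 k
    simp only [F, Nat.cast_zero, sub_zero, id]
    by_cases h : k % (n : ℤ) = 0
    · rw [if_pos h]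
    · rw [if_neg h]
      have h1 : 0 ≤ k % (n : ℤ) := Int.emod_nonneg k (by positivity)
      have h2 : k % (n : ℤ) < n := Int.emod_lt_of_pos k hn0
      have : ((0 : ℤ) + k % (n : ℤ) - 1) / ((n : ℤ) - 1) = 0 :=
        Int.ediv_eq_zero_of_lt (by omega) (by omega)
      rw [this]; ring
  | succ m ih =>
    rw [show fw n (m + 1) = fw n m ∘ simpleRefl n (m : ℤ) from rfl, ih]
    funext k
    show F n m (simpleRefl n (m : ℤ) k) = F n (m + 1) k
    set d := (k - (m : ℤ)) % (n : ℤ) with hd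
    have hnonneg : 0 ≤ d := Int.emod_nonneg _ (by positivity)
    have hlt : d < n := Int.emod_lt_of_pos _ hn0
    have hcast : ((m + 1 : ℕ) : ℤ) = (m : ℤ) + 1 := by push_cast; ring
    have hsub1 : (k - ((m : ℤ) + 1)) % (n : ℤ) = (d - 1) % (n : ℤ) := by
      rw [show k - ((m : ℤ) + 1) = (k - m) - 1 by ring, Int.sub_emod, hmod1, ← hd]
    by_cases h0 : d = 0
    · have hs : simpleRefl n (m : ℤ) k = k + 1 := by
        simp only [simpleRefl, affRefl, ← hd, if_pos h0]; ring
      have e1 : (k - ((m : ℤ) + 1)) % (n : ℤ) = (n : ℤ) - 1 := by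
        rw [hsub1, h0, show (0 : ℤ) - 1 = ((n : ℤ) - 1) + n * (-1) by ring,
          Int.add_mul_emod_self_left, Int.emod_eq_of_lt (by omega) (by omega)]
      have e3 : (k + 1 - (m : ℤ)) % (n : ℤ) = 1 := by
        rw [show k + 1 - (m : ℤ) = (k - m) + 1 by ring, Int.add_emod, ← hd, h0, hmod1,
          zero_add, hmod1]
      rw [hs]
      simp only [F, hcast]
      rw [e3, e1, if_neg (by norm_num), if_neg (by omega : ¬ ((n:ℤ) - 1 = 0))]
      rw [show (m : ℤ) + 1 + ((n : ℤ) - 1) - 1 = ((m : ℤ) + 1 - 1) + 1 * ((n : ℤ) - 1) by ring,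
        Int.add_mul_ediv_right _ _ (by omega : (n : ℤ) - 1 ≠ 0)]
      ring
    · by_cases h1 : d = 1
      · have e1 : (k - ((m : ℤ) + 1)) % (n : ℤ) = 0 := by
          rw [hsub1, h1]; norm_num
        have hs : simpleRefl n (m : ℤ) k = k - 1 := by
          simp only [simpleRefl, affRefl, ← hd]
          rw [if_neg (by omega), if_pos e1]; ring
        have e2 : (k - 1 - (m : ℤ)) % (n : ℤ) = 0 := by
          rw [show k - 1 - (m : ℤ) = k - ((m : ℤ) + 1) by ring]; exact e1
        rw [hs]
        simp only [F, hcast]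
        rw [if_pos e2, if_pos e1]; ring
      · have e1 : (k - ((m : ℤ) + 1)) % (n : ℤ) = d - 1 := by
          rw [hsub1, Int.emod_eq_of_lt (by omega) (by omega)]
        have hs : simpleRefl n (m : ℤ) k = k := by
          simp only [simpleRefl, affRefl, ← hd]
          rw [if_neg (by omega), if_neg (by omega)]
        rw [hs]
        simp only [F, hcast]
        rw [if_neg (by omega : ¬ d = 0), if_neg (by omega : ¬ (k - ((m:ℤ)+1)) % (n:ℤ) = 0), e1]
        rw [show (m : ℤ) + 1 + (d - 1) - 1 = (m : ℤ) + d - 1 by ring]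

lemma fw_self {n : ℕ} (hn : 2 ≤ n) (m : ℕ) : fw n m (m : ℤ) = 0 := by
  rw [fw_eq_F hn]
  simp [F]

lemma fw_succ_self {n : ℕ} (hn : 2 ≤ n) (m : ℕ) :
    fw n m ((m : ℤ) + 1) = (m : ℤ) + 1 + ((m / (n - 1) : ℕ) : ℤ) := by
  have hn1 : (1 : ℤ) < (n : ℤ) := by exact_mod_cast hn
  have hmod1 : (1 : ℤ) % (n : ℤ) = 1 := Int.emod_eq_of_lt (by norm_num) hn1
  rw [fw_eq_F hn]
  simp only [F, show (m : ℤ) + 1 - m = 1 by ring, hmod1]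
  rw [if_neg (by norm_num)]
  have : ((m : ℤ) + 1 - 1) = (m : ℤ) := by ring
  rw [this]
  have h2 : ((n - 1 : ℕ) : ℤ) = (n : ℤ) - 1 := by omega
  rw [show ((m / (n - 1) : ℕ) : ℤ) = (m : ℤ) / ((n - 1 : ℕ) : ℤ) from rfl, h2]

lemma fw_equiv {n : ℕ} (hn : 2 ≤ n) (m : ℕ) (k : ℤ) : fw n m (k + n) = fw n m k + n := by
  rw [fw_eq_F hn]
  simp only [F]
  have h1 : (k + n - (m : ℤ)) % (n : ℤ) = (k - m) % (n : ℤ) := by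
    rw [show k + (n : ℤ) - m = (k - m) + 1 * n by ring, Int.add_mul_emod_self_right]
  rw [h1]
  by_cases h : (k - (m : ℤ)) % (n : ℤ) = 0
  · rw [if_pos h, if_pos h]; ring
  · rw [if_neg h, if_neg h]; ring

lemma conj_affRefl {n : ℕ} (hn : 2 ≤ n) (w v : ℤ → ℤ)
    (hwv : ∀ x, w (v x) = x) (hvw : ∀ x, v (w x) = x)
    (heq : ∀ k, w (k + n) = w k + n) (a b : ℤ) :
    w ∘ affRefl n a b ∘ v = affRefl n (w a) (w b) := by
  have hn0 : (0 : ℤ) < (n : ℤ) := by positivity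
  have heqz : ∀ (c : ℤ) (k : ℤ), w (k + c * n) = w k + c * n := by
    intro c
    induction c using Int.induction_on with
    | zero => simp
    | succ c ih =>
      intro k
      have : k + ((c : ℤ) + 1) * n = (k + c * n) + n := by ring
      rw [this, heq, ih]; ring
    | pred c ih =>
      intro k
      have h1 := heq (k + (-(c : ℤ) - 1) * n)
      have : k + (-(c : ℤ) - 1) * n + n = k + (-(c : ℤ)) * n := by ring
      rw [this, ih] at h1
      omega
  have winj : ∀ x y, w x = w y → x = y := by
    intro x y h
    have := hvw x
    rw [h, hvw] at this
    omega
  have hcl : ∀ x y : ℤ, ((x - y) % (n : ℤ) = 0 ↔ (w x - w y) % (n : ℤ) = 0) := by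
    intro x y
    constructor
    · intro h
      obtain ⟨c, hc⟩ := Int.dvd_of_emod_eq_zero h
      have hx : x = y + c * n := by rw [mul_comm c ((n:ℤ))]; omega
      rw [hx, heqz]
      simp [Int.add_mul_emod_self_left]
    · intro h
      obtain ⟨c, hc⟩ := Int.dvd_of_emod_eq_zero h
      have hx : w x = w y + c * n := by rw [mul_comm c ((n:ℤ))]; omega
      rw [← heqz] at hx
      have := winj _ _ hx
      rw [this]
      simp [Int.add_mul_emod_self_left]
  funext k
  simp only [Function.comp]
  set x := v k with hx
  have hk : w x = k := hwv k
  simp only [affRefl]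
  by_cases h1 : (x - a) % (n : ℤ) = 0
  · rw [if_pos h1]
    have hra : (k - w a) % (n : ℤ) = 0 := by rw [← hk]; exact (hcl x a).mp h1
    rw [if_pos hra]
    obtain ⟨c, hc⟩ := Int.dvd_of_emod_eq_zero h1
    have hxa : x = a + c * n := by rw [mul_comm c ((n:ℤ))]; omega
    have h2 : x - a + b = b + c * n := by rw [mul_comm c ((n:ℤ))]; omega
    rw [h2, heqz]
    have h3 : w x = w a + c * n := by rw [hxa, heqz]
    omega
  · rw [if_neg h1]
    have hra : ¬ (k - w a) % (n : ℤ) = 0 := by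
      rw [← hk]; exact fun hc => h1 ((hcl x a).mpr hc)
    rw [if_neg hra]
    by_cases h2 : (x - b) % (n : ℤ) = 0
    · rw [if_pos h2]
      have hrb : (k - w b) % (n : ℤ) = 0 := by rw [← hk]; exact (hcl x b).mp h2
      rw [if_pos hrb]
      obtain ⟨c, hc⟩ := Int.dvd_of_emod_eq_zero h2
      have hxb : x = b + c * n := by rw [mul_comm c ((n:ℤ))]; omega
      have h3 : x - b + a = a + c * n := by rw [mul_comm c ((n:ℤ))]; omega
      rw [h3, heqz]
      have h4 : w x = w b + c * n := by rw [hxb, heqz]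
      omega
    · rw [if_neg h2]
      have hrb : ¬ (k - w b) % (n : ℤ) = 0 := by
        rw [← hk]; exact fun hc => h2 ((hcl x b).mpr hc)
      rw [if_neg hrb]
      exact hk

/-- the reflection of the full word at position `i` -/
def Qr (n : ℕ) (i : ℕ) : ℤ → ℤ := fw n i ∘ simpleRefl n (i : ℤ) ∘ fwInv n i

lemma Qr_invol {n : ℕ} (hn : 2 ≤ n) (i : ℕ) : Qr n i ∘ Qr n i = id := by
  funext x
  simp only [Qr, Function.comp, id]
  rw [fwInv_fw hn, s_s hn, fw_fwInv hn]

lemma Qr_eq {n : ℕ} (hn : 2 ≤ n) (i : ℕ) :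
    Qr n i = affRefl n 0 ((i : ℤ) + 1 + ((i / (n - 1) : ℕ) : ℤ)) := by
  have h := conj_affRefl hn (fw n i) (fwInv n i) (fw_fwInv hn i) (fwInv_fw hn i)
    (fw_equiv hn i) (i : ℤ) ((i : ℤ) + 1)
  rw [fw_self hn, fw_succ_self hn] at h
  exact h

/-! ### combinatorics of the skip indices -/

/-- number of skips before position `m` -/
def cnt (S : Finset ℕ) (m : ℕ) : ℕ :=
  ((skipIdx S).filter (fun x => decide (x < m))).length

lemma filter_take : ∀ (l : List ℕ), l.Pairwise (· < ·) → ∀ (p : ℕ) (hp : p < l.length),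
    l.filter (fun x => decide (x < l.get ⟨p, hp⟩)) = l.take p := by
  intro l
  induction l with
  | nil => intro _ p hp; simp at hp
  | cons a t ih =>
    intro hl p hp
    have hsa : ∀ y ∈ t, a < y := fun y hy => (List.pairwise_cons.mp hl).1 y hy
    have hst : t.Pairwise (· < ·) := (List.pairwise_cons.mp hl).2
    cases p with
    | zero =>
      show (a :: t).filter (fun x => decide (x < a)) = []
      rw [List.filter_cons_of_neg (by simp)]
      rw [List.filter_eq_nil_iff]
      intro b hb
      simp only [decide_eq_true_eq]
      exact Nat.not_lt.mpr (Nat.le_of_lt (hsa b hb))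
    | succ q =>
      have hq : q < t.length := by simpa using hp
      have hlt : a < t.get ⟨q, hq⟩ := hsa _ (List.get_mem t ⟨q, hq⟩)
      show (a :: t).filter (fun x => decide (x < t.get ⟨q, hq⟩)) = a :: t.take q
      rw [List.filter_cons_of_pos (by simpa using hlt), ih hst q hq]

lemma cnt_idx (S : Finset ℕ) (j : ℕ) (hj : j < (skipIdx S).length) :
    cnt S ((skipIdx S).get ⟨j, hj⟩) = j := by
  unfold cnt
  rw [filter_take (skipIdx S) (Finset.sortedLT_sort S).pairwise j hj, List.length_take]
  omega

lemma cnt_get (S : Finset ℕ) (m : ℕ) (hm : m ∈ S) :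
    ∃ hp : cnt S m < (skipIdx S).length, (skipIdx S).get ⟨cnt S m, hp⟩ = m := by
  have hmem : m ∈ skipIdx S := (Finset.mem_sort _).mpr hm
  obtain ⟨⟨q, hq⟩, hget⟩ := List.mem_iff_get.mp hmem
  have hc : cnt S m = q := by
    conv_lhs => rw [← hget]
    exact cnt_idx S q hq
  refine ⟨by omega, ?_⟩
  have hfin : (⟨cnt S m, by omega⟩ : Fin (skipIdx S).length) = ⟨q, hq⟩ := Fin.ext hc
  rw [hfin]
  exact hget

lemma countP_lt_succ (l : List ℕ) (m : ℕ) :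
    (l.filter (fun x => decide (x < m + 1))).length
      = (l.filter (fun x => decide (x < m))).length + l.count m := by
  induction l with
  | nil => simp
  | cons a t ih =>
    simp only [List.filter_cons, List.count_cons]
    split_ifs with h1 h2 h3 <;>
      simp only [List.length_cons, decide_eq_true_eq, beq_iff_eq] at * <;>
      omega

lemma cnt_succ_mem (S : Finset ℕ) (m : ℕ) (hm : m ∈ S) :
    cnt S (m + 1) = cnt S m + 1 := by
  unfold cnt
  rw [countP_lt_succ]
  have hmem : m ∈ skipIdx S := (Finset.mem_sort _).mpr hm
  have hc : List.count m (skipIdx S) = 1 := List.count_eq_one_of_mem (S.sort_nodup _) hmem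
  rw [hc]

lemma cnt_succ_not_mem (S : Finset ℕ) (m : ℕ) (hm : m ∉ S) :
    cnt S (m + 1) = cnt S m := by
  unfold cnt
  rw [countP_lt_succ]
  have hmem : m ∉ skipIdx S := fun h => hm ((Finset.mem_sort _).mp h)
  have hc : List.count m (skipIdx S) = 0 := List.count_eq_zero_of_not_mem hmem
  omega

/-! ### the subword prefix products -/

def up (n : ℕ) (S : Finset ℕ) (m : ℕ) : ℤ → ℤ :=
  listProd ((List.range m).map (letterAt n S))

def upInv (n : ℕ) (S : Finset ℕ) (m : ℕ) : ℤ → ℤ :=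
  listProd (((List.range m).map (letterAt n S)).reverse)

lemma letter_mem_invol {n : ℕ} (hn : 2 ≤ n) (S : Finset ℕ) (m : ℕ) :
    ∀ f ∈ (List.range m).map (letterAt n S), f ∘ f = id := by
  intro f hf
  obtain ⟨j, _, rfl⟩ := List.mem_map.mp hf
  exact letterAt_invol hn S j

lemma up_upInv {n : ℕ} (hn : 2 ≤ n) (S : Finset ℕ) (m : ℕ) (x : ℤ) :
    up n S m (upInv n S m x) = x :=
  congrFun (LP_prod_rev _ (letter_mem_invol hn S m)) x

lemma upInv_up {n : ℕ} (hn : 2 ≤ n) (S : Finset ℕ) (m : ℕ) (x : ℤ) :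
    upInv n S m (up n S m x) = x :=
  congrFun (LP_rev_prod _ (letter_mem_invol hn S m)) x

def QL (n : ℕ) (S : Finset ℕ) : List (ℤ → ℤ) := (skipIdx S).map (Qr n)

def TT (n : ℕ) (S : Finset ℕ) (j : ℕ) : ℤ → ℤ := listProd ((QL n S).take j)

def TT' (n : ℕ) (S : Finset ℕ) (j : ℕ) : ℤ → ℤ := listProd (((QL n S).take j).reverse)

lemma QL_mem_invol {n : ℕ} (hn : 2 ≤ n) (S : Finset ℕ) (j : ℕ) :
    ∀ f ∈ (QL n S).take j, f ∘ f = id := by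
  intro f hf
  obtain ⟨i, _, rfl⟩ := List.mem_map.mp (List.mem_of_mem_take hf)
  exact Qr_invol hn i

lemma TT'_TT {n : ℕ} (hn : 2 ≤ n) (S : Finset ℕ) (j : ℕ) (x : ℤ) :
    TT' n S j (TT n S j x) = x :=
  congrFun (LP_rev_prod _ (QL_mem_invol hn S j)) x

lemma TT_TT' {n : ℕ} (hn : 2 ≤ n) (S : Finset ℕ) (j : ℕ) (x : ℤ) :
    TT n S j (TT' n S j x) = x :=
  congrFun (LP_prod_rev _ (QL_mem_invol hn S j)) x

lemma lemmaA {n : ℕ} (hn : 2 ≤ n) (S : Finset ℕ) :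
    ∀ m x, up n S m x = TT n S (cnt S m) (fw n m x) := by
  intro m
  induction m with
  | zero =>
    intro x
    have hc : cnt S 0 = 0 := by
      unfold cnt
      rw [List.filter_eq_nil_iff.mpr (by intro b _; simp)]
      rfl
    rw [hc]
    rfl
  | succ m ih =>
    intro x
    have hu : up n S (m + 1) = up n S m ∘ letterAt n S m := LP_range_succ (letterAt n S) m
    rw [hu]
    by_cases hm : m ∈ S
    · obtain ⟨hp, hget⟩ := cnt_get S m hm
      have hpQL : cnt S m < (QL n S).length := by
        rw [QL, List.length_map]; exact hp
      have hQLget : (QL n S)[cnt S m]'hpQL = Qr n m := by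
        unfold QL
        exact (List.getElem_map ..).trans (congrArg (Qr n) hget)
      have htake : (QL n S).take (cnt S m + 1)
          = (QL n S).take (cnt S m) ++ [Qr n m] := by
        rw [← List.take_concat_get hpQL, hQLget, List.concat_eq_append]
      have hTT : TT n S (cnt S m + 1) = TT n S (cnt S m) ∘ Qr n m := by
        unfold TT
        rw [htake, LP_append]
        rfl
      simp only [Function.comp, letterAt, if_pos hm, id]
      rw [cnt_succ_mem S m hm, hTT]
      simp only [Function.comp]
      have hq : Qr n m (fw n (m + 1) x) = fw n m x := by
        show fw n m (simpleRefl n (m : ℤ) (fwInv n m (fw n m (simpleRefl n (m : ℤ) x)))) = _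
        rw [fwInv_fw hn, s_s hn]
      rw [hq]
      exact ih x
    · simp only [Function.comp, letterAt, if_neg hm]
      rw [cnt_succ_not_mem S m hm]
      exact ih (simpleRefl n (m : ℤ) x)

lemma lemmaA' {n : ℕ} (hn : 2 ≤ n) (S : Finset ℕ) (m : ℕ) (x : ℤ) :
    upInv n S m x = fwInv n m (TT' n S (cnt S m) x) := by
  have h1 : up n S m (fwInv n m (TT' n S (cnt S m) x)) = x := by
    rw [lemmaA hn S, fw_fwInv hn, TT_TT' hn]
  conv_lhs => rw [← h1]
  rw [upInv_up hn]

lemma conjAt_up {n : ℕ} (hn : 2 ≤ n) (S : Finset ℕ)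
    (hS : S ⊆ Finset.range (n * (n - 1))) (i : ℕ) (hi : i < n * (n - 1)) (x : ℤ) :
    conjAt n S i x = up n S i (simpleRefl n (i : ℤ) (upInv n S i x)) := by
  have hsub : (subword n S).take i = (List.range i).map (letterAt n S) := by
    unfold subword
    rw [← List.map_take, List.take_range, min_eq_left (Nat.le_of_lt hi)]
  show uPref n S i (simpleRefl n (i : ℤ) (uPrefInv n S i x)) = _
  unfold uPref uPrefInv up upInv
  rw [hsub]

lemma conjAt_invol {n : ℕ} (hn : 2 ≤ n) (S : Finset ℕ) (m : ℕ) :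
    conjAt n S m ∘ conjAt n S m = id := by
  have hmem : ∀ f ∈ (subword n S).take m, f ∘ f = id := by
    intro f hf
    obtain ⟨j, _, rfl⟩ := List.mem_map.mp (List.mem_of_mem_take hf)
    exact letterAt_invol hn S j
  have h1 : ∀ x, uPref n S m (uPrefInv n S m x) = x :=
    fun x => congrFun (LP_prod_rev _ hmem) x
  have h2 : ∀ x, uPrefInv n S m (uPref n S m x) = x :=
    fun x => congrFun (LP_rev_prod _ hmem) x
  funext x
  show uPref n S m (simpleRefl n (m:ℤ) (uPrefInv n S m
    (uPref n S m (simpleRefl n (m:ℤ) (uPrefInv n S m x))))) = x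
  rw [h2, s_s hn, h1]

lemma skipRefls_mem_invol {n : ℕ} (hn : 2 ≤ n) (S : Finset ℕ) (j : ℕ) :
    ∀ f ∈ (skipRefls n S).take j, f ∘ f = id := by
  intro f hf
  obtain ⟨i, _, rfl⟩ := List.mem_map.mp (List.mem_of_mem_take hf)
  exact conjAt_invol hn S i

lemma lemmaC {n : ℕ} (hn : 2 ≤ n) (S : Finset ℕ)
    (hS : S ⊆ Finset.range (n * (n - 1))) :
    ∀ j, j ≤ (skipIdx S).length →
      ∀ x, listProd ((skipRefls n S).take j) x = TT' n S j x := by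
  intro j
  induction j with
  | zero => intro _ x; rfl
  | succ j ih =>
    intro hj1 x
    have hj : j < (skipIdx S).length := hj1
    have hjSR : j < (skipRefls n S).length := by
      rw [skipRefls, List.length_map]; exact hj
    have hjQL : j < (QL n S).length := by
      rw [QL, List.length_map]; exact hj
    set i' := (skipIdx S).get ⟨j, hj⟩ with hi'def
    have hi'S : i' ∈ S := (Finset.mem_sort _).mp (List.get_mem _ _)
    have hi'N : i' < n * (n - 1) := Finset.mem_range.mp (hS hi'S)
    have hcnt' : cnt S i' = j := cnt_idx S j hj
    have hSRget : (skipRefls n S)[j]'hjSR = conjAt n S i' := by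
      unfold skipRefls
      exact List.getElem_map ..
    have hQLget : (QL n S)[j]'hjQL = Qr n i' := by
      unfold QL
      exact List.getElem_map ..
    have htakeSR : (skipRefls n S).take (j + 1)
        = (skipRefls n S).take j ++ [conjAt n S i'] := by
      rw [← List.take_concat_get hjSR, hSRget, List.concat_eq_append]
    have htakeQL : ((QL n S).take (j + 1)).reverse
        = Qr n i' :: ((QL n S).take j).reverse := by
      rw [← List.take_concat_get hjQL, hQLget, List.concat_eq_append, List.reverse_concat]
    have hR : TT' n S (j + 1) x = Qr n i' (TT' n S j x) := by
      unfold TT'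
      rw [htakeQL]
      rfl
    have hL : listProd ((skipRefls n S).take (j + 1)) x
        = listProd ((skipRefls n S).take j) (conjAt n S i' x) := by
      rw [htakeSR, LP_append]
      rfl
    rw [hL, hR, ih (Nat.le_of_lt hj1)]
    have hconj : conjAt n S i' x
        = TT n S j (fw n i' (simpleRefl n (i' : ℤ) (fwInv n i' (TT' n S j x)))) := by
      rw [conjAt_up hn S hS i' hi'N, lemmaA' hn S, hcnt', lemmaA hn S, hcnt']
    rw [hconj, TT'_TT hn]
    rfl

/-- For a subword `u` of `λ̂ₙ` with skip reflections `r^u = [r₁, …, r_s]`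
and (1-based) skip indices `i₁ < ⋯ < i_s`, for each `j`:
`(r₁ ⋯ r_{j-1}) r_j (r_{j-1} ⋯ r₁) = (( 0, i_j + ⌊(i_j - 1)/(n-1)⌋ ))`.
(0-based: `i` is the `j`-th 0-based skip index, so `i_j = i + 1` and the right-hand
side is `(( 0, (i+1) + i/(n-1) ))`; `r_j = conjAt n S i`.) -/
theorem stmt13 (n : ℕ) (hn : 2 ≤ n) (S : Finset ℕ)
    (hS : S ⊆ Finset.range (n * (n - 1))) :
    ∀ j : ℕ, ∀ hj : j < (skipIdx S).length, ∀ i : ℕ,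
      (skipIdx S).get ⟨j, hj⟩ = i →
      listProd ((skipRefls n S).take j) ∘ conjAt n S i ∘
          listProd (((skipRefls n S).take j).reverse)
        = affRefl n 0 ((i : ℤ) + 1 + ((i / (n - 1) : ℕ) : ℤ)) := by
  intro j hj i hig
  have hiS : i ∈ S := by
    have hmem := List.get_mem (skipIdx S) ⟨j, hj⟩
    rw [hig] at hmem
    exact (Finset.mem_sort _).mp hmem
  have hiN : i < n * (n - 1) := Finset.mem_range.mp (hS hiS)
  have hcnti : cnt S i = j := by rw [← hig]; exact cnt_idx S j hj
  funext x
  simp only [Function.comp]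
  set B := listProd (((skipRefls n S).take j).reverse) x with hB
  have hTB : TT' n S j B = x := by
    rw [← lemmaC hn S hS j (Nat.le_of_lt hj) B, hB]
    exact congrFun (LP_prod_rev _ (skipRefls_mem_invol hn S j)) x
  have hconj : conjAt n S i B
      = TT n S j (fw n i (simpleRefl n (i : ℤ) (fwInv n i (TT' n S j B)))) := by
    rw [conjAt_up hn S hS i hiN, lemmaA' hn S, hcnti, lemmaA hn S, hcnti]
  rw [lemmaC hn S hS j (Nat.le_of_lt hj) (conjAt n S i B), hconj, hTB, TT'_TT hn]
  exact congrFun (Qr_eq hn i) x
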